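/- Let (a_n)_{n≥1} be a strictly decreasing sequence of positive reals with a_n → 0 satisfying sup_{m > n > 1} (a_{m-1} - a_m)/(a_{n-1} - a_n) < ∞. Then (a_n) is bi-Lipschitz measure universal if and only if limsup_{n→∞} a_{n+1}/a_n < 1. -/

import Mathlib

open MeasureTheory Filter
open scoped ENNReal NNReal

section AuxUniv
open Metric

lemma aux_anti (a : ℕ → ℝ) (hdec : ∀ n ≥ 1, a (n + 1) < a n) :
    ∀ m n, 1 ≤ m → m ≤ n → a n ≤ a m := by
  intro m n hm hmn
  induction n with
  | zero => omega
  | succ k ih =>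
    rcases Nat.lt_or_ge m (k+1) with h | h
    · have hk : m ≤ k := by omega
      have h1 : a (k+1) < a k := hdec k (by omega)
      exact le_trans h1.le (ih hk)
    · have : m = k + 1 := by omega
      simp [this]

lemma aux_rho (a : ℕ → ℝ) (hpos : ∀ n ≥ 1, 0 < a n) (hdec : ∀ n ≥ 1, a (n + 1) < a n)
    (hls : Filter.limsup (fun n => a (n + 1) / a n) atTop < 1) :
    ∃ ρ : ℝ, 0 < ρ ∧ ρ < 1 ∧ ∀ n ≥ 1, a (n + 1) ≤ ρ * a n := by
  set u : ℕ → ℝ := fun n => a (n + 1) / a n with hu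
  have hu01 : ∀ n ≥ 1, 0 < u n ∧ u n < 1 := by
    intro n hn
    have h1 := hpos n hn
    have h2 := hpos (n+1) (by omega)
    have h3 := hdec n hn
    constructor
    · positivity
    · rw [hu]; exact (div_lt_one h1).2 h3
  set ρ₁ : ℝ := (max (Filter.limsup u atTop) (1/2) + 1) / 2 with hρ₁
  have hmax1 : max (Filter.limsup u atTop) (1/2) < 1 := max_lt hls (by norm_num)
  have hρ₁1 : ρ₁ < 1 := by rw [hρ₁]; linarith
  have hρ₁pos : (1:ℝ)/2 < ρ₁ := by
    have : (1:ℝ)/2 ≤ max (Filter.limsup u atTop) (1/2) := le_max_right _ _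
    rw [hρ₁]; linarith
  have hbd : IsBoundedUnder (· ≤ ·) atTop u :=
    ⟨1, by rw [eventually_map]; filter_upwards [eventually_ge_atTop 1] with n hn using (hu01 n hn).2.le⟩
  have hev : ∀ᶠ n in atTop, u n < ρ₁ := by
    apply eventually_lt_of_limsup_lt _ hbd
    calc Filter.limsup u atTop ≤ max (Filter.limsup u atTop) (1/2) := le_max_left _ _
    _ < ρ₁ := by rw [hρ₁]; linarith
  obtain ⟨N, hN⟩ := eventually_atTop.1 hev
  set S : Finset ℝ := insert ρ₁ ((Finset.Ico 1 N).image u) with hS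
  have hSne : S.Nonempty := ⟨ρ₁, Finset.mem_insert_self _ _⟩
  refine ⟨S.max' hSne, ?_, ?_, ?_⟩
  · have := Finset.le_max' S ρ₁ (Finset.mem_insert_self _ _)
    linarith
  · rw [Finset.max'_lt_iff]
    intro x hx
    rcases Finset.mem_insert.1 hx with rfl | hx
    · exact hρ₁1
    · obtain ⟨n, hn, rfl⟩ := Finset.mem_image.1 hx
      exact (hu01 n (Finset.mem_Ico.1 hn).1).2
  · intro n hn
    have han : 0 < a n := hpos n hn
    have : u n ≤ S.max' hSne := by
      rcases Nat.lt_or_ge n N with h | h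
      · exact Finset.le_max' S _ (Finset.mem_insert.2 (Or.inr (Finset.mem_image.2 ⟨n, Finset.mem_Ico.2 ⟨hn, h⟩, rfl⟩)))
      · exact le_trans (hN n h).le (Finset.le_max' S ρ₁ (Finset.mem_insert_self _ _))
    calc a (n+1) = u n * a n := by rw [hu]; field_simp
    _ ≤ S.max' hSne * a n := by nlinarith

lemma aux_ext (K : NNReal) (b q : ℕ → ℝ) (h : ∀ m n, |q m - q n| ≤ K * |b m - b n|) :
    ∃ g : ℝ → ℝ, LipschitzWith K g ∧ ∀ n, g (b n) = q n := by
  classical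
  set h₀ : ℝ → ℝ := fun x => q (Function.invFun b x) with hh₀
  have key : ∀ n, b (Function.invFun b (b n)) = b n := fun n =>
    Function.invFun_eq ⟨n, rfl⟩
  have hq : ∀ n, q (Function.invFun b (b n)) = q n := by
    intro n
    have h1 := h (Function.invFun b (b n)) n
    rw [key n] at h1
    simp at h1
    have := abs_nonneg (q (Function.invFun b (b n)) - q n)
    have h2 : |q (Function.invFun b (b n)) - q n| = 0 := le_antisymm (by simpa using h1) this
    have := abs_eq_zero.1 h2
    linarith
  have hlip : LipschitzOnWith K h₀ (Set.range b) := by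
    rw [lipschitzOnWith_iff_dist_le_mul]
    rintro x ⟨m, rfl⟩ y ⟨n, rfl⟩
    rw [Real.dist_eq, Real.dist_eq, hh₀]
    calc |q (Function.invFun b (b m)) - q (Function.invFun b (b n))|
        ≤ K * |b (Function.invFun b (b m)) - b (Function.invFun b (b n))| := h _ _
      _ = K * |b m - b n| := by rw [key, key]
  obtain ⟨g, hg, heq⟩ := hlip.extend_real
  exact ⟨g, hg, fun n => by rw [← heq ⟨n, rfl⟩, hh₀]; exact hq n⟩

lemma aux_density (E : Set ℝ) (hE : MeasurableSet E) (hpos : 0 < volume E)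
    (δ : ℝ) (hδ : 0 < δ) (hδ1 : δ ≤ 1) :
    ∃ d r₀ : ℝ, 0 < r₀ ∧ ∀ r : ℝ, 0 < r → r ≤ r₀ →
      volume (Eᶜ ∩ Set.Icc (d - r) (d + r)) ≤ ENNReal.ofReal (δ * r) := by
  have hae := Besicovitch.ae_tendsto_measure_inter_div (volume : Measure ℝ) E
  have hrest : (volume : Measure ℝ).restrict E Set.univ ≠ 0 := by
    rw [Measure.restrict_apply_univ]; exact hpos.ne'
  obtain ⟨d, hd⟩ : ∃ d, Tendsto (fun r => volume (E ∩ closedBall d r) / volume (closedBall d r))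
      (nhdsWithin 0 (Set.Ioi 0)) (nhds 1) := by
    by_contra hcon
    push_neg at hcon
    have : (volume.restrict E) {x : ℝ | ¬ Tendsto (fun r => volume (E ∩ closedBall x r) / volume (closedBall x r)) (nhdsWithin 0 (Set.Ioi 0)) (nhds 1)} = 0 := hae
    have huniv : {x : ℝ | ¬ Tendsto (fun r => volume (E ∩ closedBall x r) / volume (closedBall x r)) (nhdsWithin 0 (Set.Ioi 0)) (nhds 1)} = Set.univ := by
      ext x; simpa using hcon x
    rw [huniv, Measure.restrict_apply_univ] at this
    exact hpos.ne' this
  -- eventually ratio > 1 - δ/2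
  have hlt : ENNReal.ofReal (1 - δ/2) < 1 := by
    rw [← ENNReal.ofReal_one]
    exact ENNReal.ofReal_lt_ofReal_iff (by norm_num) |>.2 (by linarith)
  have hev : ∀ᶠ r in nhdsWithin (0:ℝ) (Set.Ioi 0),
      ENNReal.ofReal (1 - δ/2) < volume (E ∩ closedBall d r) / volume (closedBall d r) :=
    hd.eventually_const_lt hlt
  obtain ⟨r₀, hr₀, hr⟩ : ∃ r₀ > 0, ∀ r, 0 < r → r ≤ r₀ →
      ENNReal.ofReal (1 - δ/2) < volume (E ∩ closedBall d r) / volume (closedBall d r) := by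
    rw [eventually_nhdsWithin_iff, Metric.eventually_nhds_iff] at hev
    obtain ⟨ε, hε, hball⟩ := hev
    refine ⟨ε/2, by linarith, fun r h1 h2 => ?_⟩
    have : dist r 0 < ε := by rw [Real.dist_eq, sub_zero, abs_of_pos h1]; linarith
    exact hball this h1
  refine ⟨d, r₀, hr₀, fun r h1 h2 => ?_⟩
  have hball : closedBall d r = Set.Icc (d - r) (d + r) := Real.closedBall_eq_Icc
  have hvol : volume (closedBall d r) = ENNReal.ofReal (2 * r) := by
    rw [hball, Real.volume_Icc]; ring_nf
  have hfin : volume (closedBall d r) ≠ ⊤ := by rw [hvol]; exact ENNReal.ofReal_ne_top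
  have hne : volume (closedBall d r) ≠ 0 := by
    rw [hvol]; simp; positivity
  have hlow : ENNReal.ofReal (1 - δ/2) * volume (closedBall d r) ≤ volume (E ∩ closedBall d r) := by
    have := (hr r h1 h2).le
    rwa [ENNReal.le_div_iff_mul_le (Or.inl hne) (Or.inl hfin)] at this
  -- complement bound
  have hsplit : volume (Eᶜ ∩ closedBall d r) = volume (closedBall d r) - volume (E ∩ closedBall d r) := by
    have h1' : volume (E ∩ closedBall d r) + volume (Eᶜ ∩ closedBall d r) = volume (closedBall d r) := by
      have := measure_inter_add_diff (μ := (volume : Measure ℝ)) (closedBall d r) hE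
      rw [Set.inter_comm E, Set.inter_comm Eᶜ, ← Set.diff_eq]
      exact this
    rw [← h1', ENNReal.add_sub_cancel_left]
    exact ne_top_of_le_ne_top hfin (le_trans (measure_mono Set.inter_subset_right) le_rfl)
  rw [← hball]
  rw [hsplit]
  have : volume (closedBall d r) - volume (E ∩ closedBall d r)
      ≤ volume (closedBall d r) - ENNReal.ofReal (1 - δ/2) * volume (closedBall d r) :=
    tsub_le_tsub_left hlow _
  refine le_trans this ?_
  rw [hvol, ← ENNReal.ofReal_mul (by linarith), ← ENNReal.ofReal_sub _ (by nlinarith)]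
  apply ENNReal.ofReal_le_ofReal
  nlinarith

set_option maxHeartbeats 1000000 in
lemma aux_bwd (a : ℕ → ℝ) (hpos : ∀ n ≥ 1, 0 < a n)
    (hdec : ∀ n ≥ 1, a (n + 1) < a n)
    (hls : Filter.limsup (fun n => a (n + 1) / a n) atTop < 1)
    (E : Set ℝ) (hE : MeasurableSet E) (hEpos : 0 < volume E) :
    ∃ f : ℝ → ℝ, (∃ L : ℝ, 1 < L ∧ ∀ x y : ℝ,
        L⁻¹ * |x - y| ≤ |f x - f y| ∧ |f x - f y| ≤ L * |x - y|) ∧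
      ∀ n ≥ 1, f (a n) ∈ E := by
  classical
  obtain ⟨ρ, hρ0, hρ1, hρ⟩ := aux_rho a hpos hdec hls
  set δ : ℝ := (1 - ρ) / 8 with hδdef
  have hδ0 : 0 < δ := by rw [hδdef]; linarith
  have hδ14 : δ ≤ 1/4 := by rw [hδdef]; linarith
  obtain ⟨d, r₀, hr₀, hdens⟩ := aux_density E hE hEpos (δ/2) (by linarith) (by linarith)
  have ha1 : 0 < a 1 := hpos 1 le_rfl
  set l : ℝ := min 1 (r₀ / (2 * a 1)) with hldef
  have hl0 : 0 < l := lt_min one_pos (by positivity)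
  have hl1 : l ≤ 1 := min_le_left _ _
  have hlr : 2 * l * a 1 ≤ r₀ := by
    have : l ≤ r₀ / (2 * a 1) := min_le_right _ _
    calc 2 * l * a 1 ≤ 2 * (r₀ / (2 * a 1)) * a 1 := by nlinarith
    _ = r₀ := by field_simp
  -- choose points e n in E close to d + l * a n
  have hpick : ∀ n : ℕ, 1 ≤ n → ∃ x, x ∈ E ∧ |x - (d + l * a n)| ≤ δ * l * a n := by
    intro n hn
    have han : 0 < a n := hpos n hn
    set r : ℝ := 2 * l * a n with hrdef
    have hrpos : 0 < r := by positivity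
    have hrle : r ≤ r₀ := le_trans (by nlinarith [aux_anti a hdec 1 n le_rfl hn]) hlr
    set I : Set ℝ := Set.Icc (d + l * a n - δ * l * a n) (d + l * a n + δ * l * a n) with hI
    have hIsub : I ⊆ Set.Icc (d - r) (d + r) := by
      apply Set.Icc_subset_Icc <;> rw [hrdef] <;> nlinarith
    have hvolI : volume I = ENNReal.ofReal (2 * δ * l * a n) := by
      rw [hI, Real.volume_Icc]; ring_nf
    have hcompl : volume (Eᶜ ∩ I) ≤ ENNReal.ofReal (δ * l * a n) := by
      calc volume (Eᶜ ∩ I) ≤ volume (Eᶜ ∩ Set.Icc (d - r) (d + r)) :=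
            measure_mono (Set.inter_subset_inter_right _ hIsub)
      _ ≤ ENNReal.ofReal (δ/2 * r) := hdens r hrpos hrle
      _ = ENNReal.ofReal (δ * l * a n) := by rw [hrdef]; ring_nf
    have hEI : 0 < volume (E ∩ I) := by
      by_contra hcon
      push_neg at hcon
      have h0 : volume (E ∩ I) = 0 := le_antisymm (by simpa using hcon) (zero_le)
      have hsplit : volume (E ∩ I) + volume (Eᶜ ∩ I) = volume I := by
        have := measure_inter_add_diff (μ := (volume : Measure ℝ)) I hE
        rw [Set.inter_comm E, Set.inter_comm Eᶜ, ← Set.diff_eq]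
        exact this
      rw [h0, zero_add] at hsplit
      rw [hsplit, hvolI] at hcompl
      have := (ENNReal.ofReal_le_ofReal_iff (by positivity)).1 hcompl
      nlinarith
    obtain ⟨x, hxE, hxI⟩ := MeasureTheory.nonempty_of_measure_ne_zero hEI.ne'
    refine ⟨x, hxE, ?_⟩
    rw [hI] at hxI
    rw [abs_le]
    constructor <;> [skip; skip] <;> obtain ⟨h1, h2⟩ := hxI <;> linarith
  have hpick' : ∀ n : ℕ, ∃ x, 1 ≤ n → x ∈ E ∧ |x - (d + l * a n)| ≤ δ * l * a n := by
    intro n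
    by_cases h : 1 ≤ n
    · obtain ⟨x, hx1, hx2⟩ := hpick n h
      exact ⟨x, fun _ => ⟨hx1, hx2⟩⟩
    · exact ⟨0, fun hc => absurd hc h⟩
  choose e he using hpick'
  -- define perturbation data
  set b : ℕ → ℝ := fun n => if n = 0 then 0 else a n with hbdef
  set q : ℕ → ℝ := fun n => if n = 0 then 0 else e n - (d + l * a n) with hqdef
  have hb0 : b 0 = 0 := by simp [hbdef]
  have hq0 : q 0 = 0 := by simp [hqdef]
  have hbn : ∀ n, 1 ≤ n → b n = a n := by
    intro n hn; rw [hbdef]; simp only [if_neg (by omega : ¬ n = 0)]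
  have hqn : ∀ n, 1 ≤ n → q n = e n - (d + l * a n) := by
    intro n hn; rw [hqdef]; simp only [if_neg (by omega : ¬ n = 0)]
  have hqb : ∀ m n : ℕ, |q m - q n| ≤ (Real.toNNReal (l/4) : ℝ) * |b m - b n| := by
    have hcoe : ((Real.toNNReal (l/4) : NNReal) : ℝ) = l / 4 :=
      Real.coe_toNNReal _ (by positivity)
    rw [hcoe]
    have key : ∀ m n : ℕ, m < n → |q m - q n| ≤ l / 4 * |b m - b n| := by
      intro m n hmn
      have hn1 : 1 ≤ n := by omega
      have han : 0 < a n := hpos n hn1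
      have hqnb : |q n| ≤ δ * l * a n := by rw [hqn n hn1]; exact (he n hn1).2
      by_cases hm0 : m = 0
      · subst hm0
        rw [hb0, hq0, zero_sub, zero_sub, abs_neg, abs_neg, hbn n hn1, abs_of_pos han]
        calc |q n| ≤ δ * l * a n := hqnb
        _ ≤ l / 4 * a n := by nlinarith [mul_le_mul_of_nonneg_right hδ14 (mul_pos hl0 han).le]
      · have hm1 : 1 ≤ m := by omega
        have ham : 0 < a m := hpos m hm1
        have hqmb : |q m| ≤ δ * l * a m := by rw [hqn m hm1]; exact (he m hm1).2
        have hanm : a n ≤ ρ * a m := by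
          calc a n ≤ a (m+1) := aux_anti a hdec (m+1) n (by omega) (by omega)
          _ ≤ ρ * a m := hρ m hm1
        have hbmn : b m - b n = a m - a n := by rw [hbn m hm1, hbn n hn1]
        have hgap : (1 - ρ) * a m ≤ a m - a n := by nlinarith
        have hprod1 : l * ((1 - ρ) * a m) ≤ l * (a m - a n) :=
          mul_le_mul_of_nonneg_left hgap hl0.le
        have hprod2 : l * a n ≤ l * (ρ * a m) :=
          mul_le_mul_of_nonneg_left hanm hl0.le
        calc |q m - q n| ≤ |q m| + |q n| := abs_sub _ _
        _ ≤ δ * l * a m + δ * l * a n := add_le_add hqmb hqnb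
        _ ≤ l / 4 * (a m - a n) := by
            have h2 : l * a n ≤ l * a m :=
              hprod2.trans (mul_le_mul_of_nonneg_left (by nlinarith : ρ * a m ≤ a m) hl0.le)
            have h3 : (1 - ρ) * (l * a n) ≤ (1 - ρ) * (l * a m) :=
              mul_le_mul_of_nonneg_left h2 (by linarith)
            rw [hδdef]
            linarith [hprod1, h3]
        _ = l / 4 * |b m - b n| := by
            rw [hbmn, abs_of_nonneg (by nlinarith)]
    intro m n
    rcases lt_trichotomy m n with h | h | h
    · exact key m n h
    · subst h; simp
    · rw [abs_sub_comm, abs_sub_comm (b m)]; exact key n m h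
  obtain ⟨g, hg, hgb⟩ := aux_ext (Real.toNNReal (l/4)) b q hqb
  have hglip : ∀ x y : ℝ, |g x - g y| ≤ l / 4 * |x - y| := by
    intro x y
    have h := hg.dist_le_mul x y
    rw [Real.dist_eq, Real.dist_eq] at h
    rwa [Real.coe_toNNReal _ (by positivity : (0:ℝ) ≤ l/4)] at h
  refine ⟨fun x => d + l * x + g x, ⟨2 / l, ?_, ?_⟩, ?_⟩
  · rw [lt_div_iff₀ hl0]; linarith
  · intro x y
    have habs : |(d + l * x + g x) - (d + l * y + g y)| = |l * (x - y) + (g x - g y)| := by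
      ring_nf
    have hG := hglip x y
    have habsnn : (0:ℝ) ≤ |x - y| := abs_nonneg _
    have hA : |l * (x - y)| = l * |x - y| := by rw [abs_mul, abs_of_pos hl0]
    have hup : |l * (x - y) + (g x - g y)| ≤ l * |x - y| + l / 4 * |x - y| := by
      calc |l * (x - y) + (g x - g y)| ≤ |l * (x - y)| + |g x - g y| := abs_add_le _ _
      _ ≤ l * |x - y| + l / 4 * |x - y| := by rw [hA]; linarith
    have hlow : l * |x - y| - l / 4 * |x - y| ≤ |l * (x - y) + (g x - g y)| := by
      have h1 : |l * (x - y)| ≤ |l * (x - y) + (g x - g y)| + |g x - g y| := by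
        calc |l * (x - y)| = |(l * (x - y) + (g x - g y)) + (g y - g x)| := by ring_nf
        _ ≤ |l * (x - y) + (g x - g y)| + |g y - g x| := abs_add_le _ _
        _ = |l * (x - y) + (g x - g y)| + |g x - g y| := by rw [abs_sub_comm (g y) (g x)]
      rw [hA] at h1; linarith
    constructor
    · rw [habs, inv_div]
      have hpos' : 0 ≤ l * |x - y| := by positivity
      calc l / 2 * |x - y| ≤ l * |x - y| - l / 4 * |x - y| := by linarith
      _ ≤ _ := hlow
    · rw [habs]
      refine le_trans hup ?_
      have hll : l * l ≤ 1 := by nlinarith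
      rw [show (2:ℝ)/l*|x-y| = 2*|x-y|/l by ring, le_div_iff₀ hl0]
      nlinarith [mul_le_mul_of_nonneg_right hll habsnn]
  · intro n hn
    have hgan : g (a n) = e n - (d + l * a n) := by
      have h1 : g (a n) = q n := by rw [← hbn n hn]; exact hgb n
      rw [h1, hqn n hn]
    simp only [hgan]
    have heq : d + l * a n + (e n - (d + l * a n)) = e n := by ring
    rw [heq]
    exact (he n hn).1

lemma aux_chain (s w : ℝ) (hs : 0 < s) (hw : 0 ≤ w) (hws : w < s)
    (y : ℕ → ℝ) (N M : ℕ) (hNM : N ≤ M)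
    (hgap : ∀ i, N ≤ i → i < M → |y (i+1) - y i| ≤ w)
    (havoid : ∀ i, N ≤ i → i ≤ M → ∀ j : ℤ, y i ∉ Set.Icc (j*s) (j*s+w)) :
    |y M - y N| < s := by
  set J : ℤ := ⌊y N / s⌋ with hJ
  have hbasic : ∀ i, N ≤ i → i ≤ M → (∀ j : ℤ, y i ∉ Set.Icc (j*s) (j*s+w)) →
      (⌊y i / s⌋ : ℝ) * s + w < y i ∧ y i < ((⌊y i / s⌋ : ℝ) + 1) * s := by
    intro i _ _ hav
    have h1 : (⌊y i / s⌋ : ℝ) ≤ y i / s := Int.floor_le _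
    have h2 : y i / s < (⌊y i / s⌋ : ℝ) + 1 := Int.lt_floor_add_one _
    have h3 : (⌊y i / s⌋ : ℝ) * s ≤ y i := (le_div_iff₀ hs).1 h1
    have h4 : y i < ((⌊y i / s⌋ : ℝ) + 1) * s := (div_lt_iff₀ hs).1 h2
    have h5 := hav ⌊y i / s⌋
    rw [Set.mem_Icc] at h5
    push_neg at h5
    exact ⟨h5 h3, h4⟩
  have key : ∀ i, N ≤ i → i ≤ M → ⌊y i / s⌋ = J ∧ (J:ℝ) * s + w < y i ∧ y i < ((J:ℝ) + 1) * s := by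
    intro i hNi hiM
    induction i with
    | zero =>
      have : N = 0 := by omega
      subst this
      have hb := hbasic 0 le_rfl hiM (havoid 0 le_rfl hiM)
      exact ⟨by rw [hJ], by rw [hJ]; exact hb.1, by rw [hJ]; exact hb.2⟩
    | succ i ih =>
      rcases Nat.lt_or_ge N (i+1) with hlt | hge
      · have hNi' : N ≤ i := by omega
        have hiM' : i ≤ M := by omega
        obtain ⟨hfl, hlo, hhi⟩ := ih hNi' hiM'
        have hb := hbasic (i+1) hNi hiM (havoid (i+1) hNi hiM)
        have hgapi := hgap i hNi' (by omega)
        set J' : ℤ := ⌊y (i+1) / s⌋ with hJ'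
        have hJeq : J' = J := by
          by_contra hne
          rcases lt_or_gt_of_ne hne with h | h
          · -- J' ≤ J - 1 : y (i+1) < (J'+1) s ≤ J s < y i - w
            have hc1 : ((J':ℝ) + 1) ≤ (J:ℝ) := by
              have : J' + 1 ≤ J := by omega
              exact_mod_cast this
            have hc2 : y (i+1) < (J:ℝ) * s := lt_of_lt_of_le hb.2 (by nlinarith)
            have : y i - y (i+1) > w := by nlinarith
            have := abs_le.1 hgapi
            linarith [this.1]
          · -- J' ≥ J + 1 : y (i+1) > J' s + w ≥ (J+1) s + w > y i + w
            have hc1 : (J:ℝ) + 1 ≤ (J':ℝ) := by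
              have : J + 1 ≤ J' := by omega
              exact_mod_cast this
            have hc2 : ((J:ℝ)+1) * s + w < y (i+1) := by nlinarith [hb.1]
            have : y (i+1) - y i > w := by nlinarith
            have := abs_le.1 hgapi
            linarith [this.2]
        rw [hJeq] at hb
        exact ⟨hJeq, hb.1, hb.2⟩
      · have hNe : N = i + 1 := by omega
        subst hNe
        have hb := hbasic (i+1) le_rfl hiM (havoid (i+1) le_rfl hiM)
        rw [hJ]
        exact ⟨rfl, hb.1, hb.2⟩
  obtain ⟨_, h1, h2⟩ := key M hNM le_rfl
  obtain ⟨_, h3, h4⟩ := key N le_rfl hNM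
  rw [abs_lt]
  constructor <;> nlinarith

lemma aux_Gvol (s w : ℝ) (hs : 0 < s) (hw : 0 ≤ w) (c : ℝ)
    (hc1 : w / s ≤ c) (hc2 : w ≤ c) (hws : w ≤ s) :
    volume ((⋃ j : ℤ, Set.Icc ((j:ℝ)*s) ((j:ℝ)*s+w)) ∩ Set.Icc (0:ℝ) 1)
      ≤ ENNReal.ofReal (4*c) := by
  set m : ℤ := ⌈1/s⌉ with hm
  have hm1 : 1 ≤ m := by
    have : (0:ℝ) < 1/s := by positivity
    rw [hm]
    exact Int.ceil_pos.2 this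
  set F : Finset ℤ := Finset.Icc (-1 : ℤ) m with hF
  have hcover : (⋃ j : ℤ, Set.Icc ((j:ℝ)*s) ((j:ℝ)*s+w)) ∩ Set.Icc (0:ℝ) 1
      ⊆ ⋃ j ∈ F, Set.Icc ((j:ℝ)*s) ((j:ℝ)*s+w) := by
    rintro x ⟨hx1, hx2⟩
    obtain ⟨S, ⟨j, rfl⟩, hxS⟩ := hx1
    simp only [Set.mem_Icc] at hxS hx2
    refine Set.mem_iUnion₂.2 ⟨j, ?_, Set.mem_Icc.2 hxS⟩
    rw [hF, Finset.mem_Icc]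
    constructor
    · by_contra hj
      push_neg at hj
      have hj2 : (j:ℝ) ≤ -2 := by exact_mod_cast (by omega : j ≤ -2)
      nlinarith [hxS.2, hx2.1]
    · by_contra hj
      push_neg at hj
      have hj2 : (1:ℝ)/s < (j:ℝ) := by
        calc (1:ℝ)/s ≤ (m:ℝ) := Int.le_ceil _
        _ < (j:ℝ) := by exact_mod_cast hj
      have h3 : 1 < (j:ℝ) * s := by
        rw [div_lt_iff₀ hs] at hj2
        nlinarith
      nlinarith [hxS.1, hx2.2]
  calc volume ((⋃ j : ℤ, Set.Icc ((j:ℝ)*s) ((j:ℝ)*s+w)) ∩ Set.Icc (0:ℝ) 1)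
      ≤ volume (⋃ j ∈ F, Set.Icc ((j:ℝ)*s) ((j:ℝ)*s+w)) := measure_mono hcover
    _ ≤ ∑ j ∈ F, volume (Set.Icc ((j:ℝ)*s) ((j:ℝ)*s+w)) := measure_biUnion_finset_le F _
    _ = ∑ j ∈ F, ENNReal.ofReal w := by
        apply Finset.sum_congr rfl
        intro j _
        rw [Real.volume_Icc]
        ring_nf
    _ = (F.card : ℝ≥0∞) * ENNReal.ofReal w := by
        rw [Finset.sum_const, nsmul_eq_mul]
    _ ≤ ENNReal.ofReal (4*c) := by
        have hcard : (F.card : ℝ) = (m:ℝ) + 2 := by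
          have hcc : F.card = (m + 2).toNat := by
            rw [hF, Int.card_Icc]
            congr 1
            ring
          have hz : ((m+2).toNat : ℤ) = m + 2 := Int.toNat_of_nonneg (by omega)
          rw [hcc]
          rw [show ((((m+2).toNat : ℕ)) : ℝ) = (((m+2).toNat : ℤ) : ℝ) by push_cast; ring, hz]
          push_cast
          ring
        rw [← ENNReal.ofReal_natCast F.card, ← ENNReal.ofReal_mul (by positivity)]
        apply ENNReal.ofReal_le_ofReal
        have hmb : (m:ℝ) < 1/s + 1 := by
          rw [hm]
          exact Int.ceil_lt_add_one _
        have h1 : (1/s) * w ≤ c := by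
          rw [div_mul_eq_mul_div, one_mul]
          exact hc1
        rw [hcard]
        calc ((m:ℝ) + 2) * w ≤ (1/s + 3) * w := by nlinarith
        _ = (1/s) * w + 3 * w := by ring
        _ ≤ c + 3 * c := by linarith
        _ = 4 * c := by ring

set_option maxHeartbeats 1000000 in
lemma aux_fwd (a : ℕ → ℝ) (hpos : ∀ n ≥ 1, 0 < a n)
    (hdec : ∀ n ≥ 1, a (n + 1) < a n)
    (hlim : Tendsto a atTop (nhds 0))
    (hsup : ∃ C : ℝ, ∀ m n : ℕ, 1 < n → n < m →
      (a (m - 1) - a m) / (a (n - 1) - a n) ≤ C)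
    (hU : ∀ E : Set ℝ, MeasurableSet E → 0 < volume E →
        ∃ f : ℝ → ℝ, (∃ L : ℝ, 1 < L ∧ ∀ x y : ℝ,
            L⁻¹ * |x - y| ≤ |f x - f y| ∧ |f x - f y| ≤ L * |x - y|) ∧
          ∀ n ≥ 1, f (a n) ∈ E) :
    Filter.limsup (fun n => a (n + 1) / a n) atTop < 1 := by
  by_contra hcon
  obtain ⟨C₀, hC₀⟩ := hsup
  set C : ℝ := max C₀ 1 with hCdef
  have hC1 : (1:ℝ) ≤ C := le_max_right _ _
  have hC0 : (0:ℝ) < C := lt_of_lt_of_le one_pos hC1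
  -- gap quasi-monotonicity
  have hgapC : ∀ N i : ℕ, 1 ≤ N → N ≤ i → a i - a (i+1) ≤ C * (a N - a (N+1)) := by
    intro N i hN hNi
    have hdN : 0 < a N - a (N+1) := by linarith [hdec N hN]
    rcases eq_or_lt_of_le hNi with rfl | h
    · nlinarith
    · have h1 := hC₀ (i+1) (N+1) (by omega) (by omega)
      simp only [Nat.add_sub_cancel] at h1
      have h2 : (a i - a (i+1)) / (a N - a (N+1)) ≤ C := h1.trans (le_max_left _ _)
      exact (div_le_iff₀ hdN).1 h2
  -- frequently ratios near 1
  have hfreq : ∀ δ : ℝ, 0 < δ → ∃ n, 1 ≤ n ∧ a n ≤ 1 ∧ a n - a (n+1) ≤ δ * a n := by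
    intro δ hδ
    have hsmall : ∀ᶠ n in atTop, a n < 1 := hlim.eventually_lt_const one_pos
    have hb : ∀ᶠ n in atTop, 0 ≤ a (n+1) / a n ∧ a (n+1) / a n ≤ 1 := by
      filter_upwards [eventually_ge_atTop 1] with n hn
      have h1 := hpos n hn
      have h2 := hpos (n+1) (by omega)
      have h3 := hdec n hn
      constructor
      · positivity
      · exact le_of_lt ((div_lt_one h1).2 h3)
    have hfr : ∃ᶠ n in atTop, 1 - δ < a (n+1) / a n := by
      rw [not_lt] at hcon
      by_contra hcf
      rw [not_frequently] at hcf
      have hcb : IsCoboundedUnder (· ≤ ·) atTop (fun n => a (n+1) / a n) :=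
        isCoboundedUnder_le_of_eventually_le atTop (x := 0)
          (by filter_upwards [hb] with n hn using hn.1)
      have : Filter.limsup (fun n => a (n + 1) / a n) atTop ≤ 1 - δ :=
        limsup_le_of_le hcb (by filter_upwards [hcf] with n hn; simpa using hn)
      linarith
    obtain ⟨n, hn1, hn2, hn3⟩ :=
      (hfr.and_eventually (hsmall.and (eventually_ge_atTop 1))).exists
    refine ⟨n, hn3, hn2.le, ?_⟩
    have han : 0 < a n := hpos n hn3
    have := (lt_div_iff₀ han).1 hn1
    nlinarith
  -- pick levels
  have hpick : ∀ k : ℕ, ∃ n, 1 ≤ n ∧ a n ≤ 1 ∧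
      a n - a (n+1) ≤ ((1/8:ℝ)^(k+1) / (4*((k:ℝ)+1)^2*C + 1)) * a n := by
    intro k
    apply hfreq
    have h1 : (0:ℝ) < (1/8:ℝ)^(k+1) := by positivity
    have h2 : (0:ℝ) < 4*((k:ℝ)+1)^2*C + 1 := by
      have : (0:ℝ) ≤ 4*((k:ℝ)+1)^2 := by positivity
      nlinarith
    positivity
  choose nn hnn1 hnn2 hnn3 using hpick
  -- scales and widths
  set sk : ℕ → ℝ := fun k => a (nn k) / (4*((k:ℝ)+1)) with hskdef
  set wk : ℕ → ℝ := fun k => ((k:ℝ)+1) * C * (a (nn k) - a (nn k + 1)) with hwkdef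
  have hank : ∀ k, 0 < a (nn k) := fun k => hpos (nn k) (hnn1 k)
  have hgapk : ∀ k, 0 < a (nn k) - a (nn k + 1) := fun k => by
    linarith [hdec (nn k) (hnn1 k)]
  have hsk0 : ∀ k, 0 < sk k := by
    intro k
    rw [hskdef]
    have := hank k
    have : (0:ℝ) < 4*((k:ℝ)+1) := by positivity
    exact div_pos (hank k) this
  have hwk0 : ∀ k, 0 < wk k := by
    intro k
    rw [hwkdef]
    have h1 : (0:ℝ) < (k:ℝ)+1 := by positivity
    exact mul_pos (mul_pos h1 hC0) (hgapk k)
  have hratio : ∀ k, wk k / sk k ≤ (1/8:ℝ)^(k+1) := by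
    intro k
    rw [hwkdef, hskdef]
    have h2 : (0:ℝ) < 4*((k:ℝ)+1) := by positivity
    rw [div_div_eq_mul_div, div_le_iff₀ (hank k)]
    have h3 := hnn3 k
    have hden : (0:ℝ) < 4*((k:ℝ)+1)^2*C + 1 := by nlinarith [sq_nonneg ((k:ℝ)+1)]
    have h4 : (4*((k:ℝ)+1)^2*C) * (a (nn k) - a (nn k + 1))
        ≤ (4*((k:ℝ)+1)^2*C) * (((1/8:ℝ)^(k+1) / (4*((k:ℝ)+1)^2*C + 1)) * a (nn k)) := by
      apply mul_le_mul_of_nonneg_left h3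
      have : (0:ℝ) ≤ ((k:ℝ)+1)^2 := sq_nonneg _
      nlinarith
    have h5 : (4*((k:ℝ)+1)^2*C) * (((1/8:ℝ)^(k+1) / (4*((k:ℝ)+1)^2*C + 1)) * a (nn k))
        ≤ (1/8:ℝ)^(k+1) * a (nn k) := by
      rw [div_mul_eq_mul_div, mul_div_assoc', div_le_iff₀ hden]
      have h6 : (0:ℝ) ≤ (1/8:ℝ)^(k+1) * a (nn k) := mul_nonneg (by positivity) (hank k).le
      nlinarith
    calc ((k:ℝ)+1) * C * (a (nn k) - a (nn k + 1)) * (4*((k:ℝ)+1))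
        = (4*((k:ℝ)+1)^2*C) * (a (nn k) - a (nn k + 1)) := by ring
      _ ≤ (1/8:ℝ)^(k+1) * a (nn k) := h4.trans h5
  have hws : ∀ k, wk k ≤ (1/8:ℝ)^(k+1) * sk k := by
    intro k
    have h1 := hratio k
    have h2 := hsk0 k
    rw [div_le_iff₀ h2] at h1
    linarith
  have hwlt : ∀ k, wk k < sk k := by
    intro k
    have h1 := hws k
    have h2 := hsk0 k
    have h3 : (1/8:ℝ)^(k+1) < 1 := pow_lt_one₀ (by norm_num) (by norm_num) (by omega)
    nlinarith [pow_pos (by norm_num : (0:ℝ) < 1/8) (k+1)]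
  have hwb : ∀ k, wk k ≤ (1/8:ℝ)^(k+1) := by
    intro k
    refine (hws k).trans ?_
    have h1 : sk k ≤ 1 := by
      rw [hskdef]
      rw [div_le_one (by positivity)]
      have := hnn2 k
      have hk1 : (1:ℝ) ≤ 4*((k:ℝ)+1) := by
        have : (0:ℝ) ≤ (k:ℝ) := Nat.cast_nonneg k
        linarith
      linarith
    nlinarith [pow_pos (by norm_num : (0:ℝ) < 1/8) (k+1)]
  -- the bad set
  set G : ℕ → Set ℝ := fun k => ⋃ j : ℤ, Set.Icc ((j:ℝ) * sk k) ((j:ℝ) * sk k + wk k) with hGdef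
  have hGmeas : ∀ k, MeasurableSet (G k) :=
    fun k => MeasurableSet.iUnion (fun j => measurableSet_Icc)
  set E : Set ℝ := Set.Icc (0:ℝ) 1 \ ⋃ k, G k with hEdef
  have hEmeas : MeasurableSet E :=
    measurableSet_Icc.diff (MeasurableSet.iUnion hGmeas)
  have hGvol : ∀ k, volume (G k ∩ Set.Icc (0:ℝ) 1) ≤ ENNReal.ofReal (4 * (1/8:ℝ)^(k+1)) :=
    fun k => aux_Gvol (sk k) (wk k) (hsk0 k) (hwk0 k).le _ (hratio k) (hwb k)
      ((hwlt k).le)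
  have hvolU : volume ((⋃ k, G k) ∩ Set.Icc (0:ℝ) 1) ≤ ENNReal.ofReal (4/7) := by
    rw [Set.iUnion_inter]
    refine (measure_iUnion_le _).trans ?_
    have hsum : ∀ k : ℕ, volume (G k ∩ Set.Icc (0:ℝ) 1) ≤ ENNReal.ofReal ((4/7) * (7/8) * (1/8:ℝ)^k) := by
      intro k
      refine (hGvol k).trans ?_
      apply ENNReal.ofReal_le_ofReal
      rw [pow_succ]
      ring_nf
      exact le_refl _
    refine (ENNReal.tsum_le_tsum hsum).trans ?_
    have hnn : ∀ k : ℕ, (0:ℝ) ≤ (4/7) * (7/8) * (1/8:ℝ)^k := by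
      intro k; positivity
    have hsummable : Summable (fun k : ℕ => (4/7) * (7/8) * (1/8:ℝ)^k) :=
      (summable_geometric_of_lt_one (by norm_num) (by norm_num)).mul_left _
    rw [← ENNReal.ofReal_tsum_of_nonneg hnn hsummable]
    apply ENNReal.ofReal_le_ofReal
    rw [tsum_mul_left, tsum_geometric_of_lt_one (by norm_num) (by norm_num)]
    norm_num
  have hEvol : 0 < volume E := by
    by_contra hc
    push_neg at hc
    have h0 : volume E = 0 := le_antisymm (by simpa using hc) (zero_le)
    have hsub : Set.Icc (0:ℝ) 1 ⊆ E ∪ ((⋃ k, G k) ∩ Set.Icc (0:ℝ) 1) := by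
      intro x hx
      by_cases hxG : x ∈ ⋃ k, G k
      · exact Or.inr ⟨hxG, hx⟩
      · exact Or.inl ⟨hx, hxG⟩
    have h1 : volume (Set.Icc (0:ℝ) 1) ≤ volume E + volume ((⋃ k, G k) ∩ Set.Icc (0:ℝ) 1) :=
      (measure_mono hsub).trans (measure_union_le _ _)
    rw [h0, zero_add, Real.volume_Icc] at h1
    have h2 : ENNReal.ofReal (1 - 0) ≤ ENNReal.ofReal (4/7) := h1.trans hvolU
    rw [ENNReal.ofReal_le_ofReal_iff (by norm_num)] at h2
    norm_num at h2
  -- apply universality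
  obtain ⟨f, ⟨L, hL1, hLf⟩, hfE⟩ := hU E hEmeas hEvol
  set K : ℕ := ⌈L⌉₊ with hKdef
  have hLK : L ≤ (K:ℝ) + 1 := (Nat.le_ceil L).trans (by linarith)
  have hL0 : (0:ℝ) < L := lt_trans one_pos hL1
  set N : ℕ := nn K with hNdef
  have hN1 : 1 ≤ N := hnn1 K
  have haN : 0 < a N := hpos N hN1
  obtain ⟨M, hM2, hM1⟩ : ∃ M, a M < a N / 2 ∧ N ≤ M :=
    ((hlim.eventually_lt_const (by linarith : (0:ℝ) < a N / 2)).and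
      (eventually_ge_atTop N)).exists
  have hchain : |f (a M) - f (a N)| < sk K := by
    apply aux_chain (sk K) (wk K) (hsk0 K) (hwk0 K).le (hwlt K) (fun i => f (a i)) N M hM1
    · intro i hNi _
      have hi1 : 1 ≤ i := le_trans hN1 hNi
      have hgapi : a i - a (i+1) ≤ C * (a N - a (N+1)) := hgapC N i hN1 hNi
      have hup := (hLf (a (i+1)) (a i)).2
      have habs : |a (i+1) - a i| = a i - a (i+1) := by
        rw [abs_sub_comm, abs_of_pos (by linarith [hdec i hi1])]
      rw [habs] at hup
      refine hup.trans ?_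
      rw [hwkdef]
      have h1 : L * (a i - a (i + 1)) ≤ L * (C * (a N - a (N+1))) :=
        mul_le_mul_of_nonneg_left hgapi hL0.le
      have h2 : L * (C * (a N - a (N+1))) ≤ ((K:ℝ)+1) * (C * (a N - a (N+1))) := by
        apply mul_le_mul_of_nonneg_right hLK
        have := hgapk K
        rw [hNdef]
        positivity
      calc L * (a i - a (i + 1)) ≤ ((K:ℝ)+1) * (C * (a N - a (N+1))) := h1.trans h2
        _ = ((K:ℝ)+1) * C * (a (nn K) - a (nn K + 1)) := by rw [hNdef]; ring
    · intro i hNi hiM j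
      have hi1 : 1 ≤ i := le_trans hN1 hNi
      have hfi := hfE i hi1
      rw [hEdef] at hfi
      intro hmem
      apply hfi.2
      exact Set.mem_iUnion.2 ⟨K, Set.mem_iUnion.2 ⟨j, hmem⟩⟩
  -- contradiction
  have hlow := (hLf (a M) (a N)).1
  have haMN : a M < a N := lt_of_lt_of_le hM2 (by linarith)
  have habs2 : |a M - a N| = a N - a M := by
    rw [abs_sub_comm, abs_of_pos (by linarith : (0:ℝ) < a N - a M)]
  rw [habs2] at hlow
  have hinv : ((K:ℝ)+1)⁻¹ ≤ L⁻¹ := inv_anti₀ hL0 hLK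
  have hKpos : (0:ℝ) < (K:ℝ) + 1 := by positivity
  have h3 : ((K:ℝ)+1)⁻¹ * (a N - a M) ≤ L⁻¹ * (a N - a M) :=
    mul_le_mul_of_nonneg_right hinv (by linarith)
  have h4 : 2 * sk K ≤ ((K:ℝ)+1)⁻¹ * (a N - a M) := by
    have hhalf : a N / 2 ≤ a N - a M := by linarith
    have h5 : ((K:ℝ)+1)⁻¹ * (a N / 2) ≤ ((K:ℝ)+1)⁻¹ * (a N - a M) :=
      mul_le_mul_of_nonneg_left hhalf (by positivity)
    refine le_trans (le_of_eq ?_) h5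
    show 2 * (a (nn K) / (4*((K:ℝ)+1))) = ((K:ℝ)+1)⁻¹ * (a (nn K) / 2)
    field_simp
    ring
  have h6 := hsk0 K
  linarith

end AuxUniv

theorem stmt8 (a : ℕ → ℝ) (hpos : ∀ n ≥ 1, 0 < a n)
    (hdec : ∀ n ≥ 1, a (n + 1) < a n)
    (hlim : Tendsto a atTop (nhds 0))
    (hsup : ∃ C : ℝ, ∀ m n : ℕ, 1 < n → n < m →
      (a (m - 1) - a m) / (a (n - 1) - a n) ≤ C) :
    (∀ E : Set ℝ, MeasurableSet E → 0 < volume E →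
        ∃ f : ℝ → ℝ, (∃ L : ℝ, 1 < L ∧ ∀ x y : ℝ,
            L⁻¹ * |x - y| ≤ |f x - f y| ∧ |f x - f y| ≤ L * |x - y|) ∧
          ∀ n ≥ 1, f (a n) ∈ E) ↔
      Filter.limsup (fun n => a (n + 1) / a n) atTop < 1 := by
  constructor
  · intro hU
    exact aux_fwd a hpos hdec hlim hsup hU
  · intro hls E hE hEpos
    exact aux_bwd a hpos hdec hls E hE hEpos
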